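/- Expectation of the log of a squared centered Gaussian: let v > 0 and let X be a Gaussian random variable with mean 0 and variance v. Then E[log(X²)] = log v − (γ_EM + log 2), where γ_EM is the Euler–Mascheroni constant. -/

import Mathlib

open MeasureTheory ProbabilityTheory Real
open MeasureTheory Set Real Filter
open scoped NNReal ENNReal


noncomputable def Dlog : ℝ := ∫ t in Set.Ioi (0:ℝ), t ^ (-(2⁻¹:ℝ)) * (Real.log t * Real.exp (-t))

lemma complex_eq_real :
    (∫ t in Set.Ioi (0:ℝ), (t:ℂ) ^ ((1/2:ℂ) - 1) * (Real.log t * Real.exp (-t))) = (Dlog : ℂ) := by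
  rw [Dlog]
  calc (∫ t in Set.Ioi (0:ℝ), (t:ℂ) ^ ((1/2:ℂ) - 1) * (Real.log t * Real.exp (-t)))
      = ∫ t in Set.Ioi (0:ℝ), ((t ^ (-(2⁻¹:ℝ)) * (Real.log t * Real.exp (-t)) : ℝ) : ℂ) := by
        refine setIntegral_congr_fun measurableSet_Ioi (fun t ht => ?_)
        rw [show ((1/2:ℂ) - 1) = Complex.ofReal (-(2⁻¹:ℝ)) by norm_num [Complex.ofReal_neg],
          ← Complex.ofReal_cpow (le_of_lt ht)]
        push_cast
        ring
    _ = _ := integral_ofReal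

lemma Dlog_val : Dlog = -Real.sqrt π * (Real.eulerMascheroniConstant + 2 * Real.log 2) := by
  have hd : HasDerivAt Complex.GammaIntegral (Dlog : ℂ) (1/2 : ℂ) := by
    have := Complex.hasDerivAt_GammaIntegral (s := 1/2) (by norm_num)
    rwa [complex_eq_real] at this
  have hopen : IsOpen {s : ℂ | 0 < s.re} := isOpen_lt continuous_const Complex.continuous_re
  have hmem : (1/2 : ℂ) ∈ {s : ℂ | 0 < s.re} := by norm_num
  have hG : HasDerivAt Complex.Gamma (Dlog : ℂ) (1/2 : ℂ) := by
    refine hd.congr_of_eventuallyEq ?_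
    filter_upwards [hopen.mem_nhds hmem] with s hs
    exact Complex.Gamma_eq_integral hs
  have hG' : HasDerivAt (fun x : ℝ => (Complex.Gamma x).re) ((Dlog:ℂ)).re (1/2 : ℝ) := by
    apply HasDerivAt.real_of_complex
    have : ((1/2 : ℝ) : ℂ) = (1/2 : ℂ) := by norm_num
    rw [this]; exact hG
  have hre : (fun x : ℝ => (Complex.Gamma x).re) = Real.Gamma := by
    funext x; rw [Complex.Gamma_ofReal, Complex.ofReal_re]
  rw [hre, Complex.ofReal_re] at hG'
  exact hG'.unique Real.hasDerivAt_Gamma_one_half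

lemma Dlog_integrable :
    IntegrableOn (fun t : ℝ => t ^ (-(2⁻¹:ℝ)) * (Real.log t * Real.exp (-t))) (Set.Ioi 0) := by
  have h := (mellin_hasDerivAt_of_isBigO_rpow (E := ℂ)
      (f := fun x : ℝ => ((Real.exp (-x) : ℝ) : ℂ)) (s := 1/2) (a := 1) (b := 0)
      ?_ ?_ (by norm_num) ?_ (by norm_num)).1
  · rw [MellinConvergent] at h
    refine IntegrableOn.congr_fun (h.re) (fun t ht => ?_) measurableSet_Ioi
    rw [show ((1/2:ℂ) - 1) = Complex.ofReal (-(2⁻¹:ℝ)) by norm_num [Complex.ofReal_neg],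
      ← Complex.ofReal_cpow (le_of_lt ht)]
    simp only [smul_eq_mul, Complex.real_smul, RCLike.re_to_complex, ← Complex.ofReal_mul,
      Complex.ofReal_re]
  · refine (Continuous.continuousOn ?_).locallyIntegrableOn measurableSet_Ioi
    exact Complex.continuous_ofReal.comp (Real.continuous_exp.comp continuous_neg)
  · rw [← Asymptotics.isBigO_norm_left]
    simp_rw [Complex.norm_real,
      Asymptotics.isBigO_norm_left]
    simpa only [neg_one_mul] using (isLittleO_exp_neg_mul_rpow_atTop zero_lt_one _).isBigO
  · simp_rw [neg_zero, rpow_zero]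
    refine Asymptotics.isBigO_const_of_tendsto (?_ : Filter.Tendsto _ _ (nhds (1 : ℂ))) one_ne_zero
    rw [(by simp : (1 : ℂ) = Real.exp (-0))]
    exact (Complex.continuous_ofReal.comp (Real.continuous_exp.comp continuous_neg)).continuousWithinAt

/-- **Expectation of the log of a squared centered Gaussian**: if `X ~ N(0, v)` with `v > 0`,
then `E[log(X²)] = log v − (γ_EM + log 2)`, where `γ_EM` is the Euler–Mascheroni constant. -/
theorem integral_log_sq_gaussian
    {Ω : Type*} [MeasurableSpace Ω] (μ : Measure Ω) [IsProbabilityMeasure μ]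
    (v : ℝ) (hv : 0 < v) (X : Ω → ℝ) (hXm : AEMeasurable X μ)
    (hX : Measure.map X μ = gaussianReal 0 ⟨v, hv.le⟩) :
    μ[fun ω => Real.log (X ω ^ 2)]
      = Real.log v - (Real.eulerMascheroniConstant + Real.log 2) := by
  set V : ℝ≥0 := ⟨v, hv.le⟩ with hVdef
  have hVv : (V : ℝ) = v := rfl
  have hV0 : V ≠ 0 := by
    intro h
    rw [← NNReal.coe_eq_zero] at h  -- maybe wrong name
    exact hv.ne' (by rw [← hVv, h])
  set c : ℝ := (Real.sqrt (2 * π * v))⁻¹ with hcdef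
  -- Step 1: transport to gaussianReal
  have hmeas : AEStronglyMeasurable (fun x : ℝ => Real.log (x ^ 2)) (Measure.map X μ) :=
    (Real.measurable_log.comp (measurable_id.pow_const 2)).aestronglyMeasurable
  have h1 : μ[fun ω => Real.log (X ω ^ 2)]
      = ∫ x, Real.log (x ^ 2) ∂(gaussianReal 0 V) := by
    rw [← hX, integral_map hXm hmeas]
  rw [h1, gaussianReal_of_var_ne_zero 0 hV0]
  -- Step 2: density
  have h2 : ∫ x, Real.log (x ^ 2) ∂(volume.withDensity (gaussianPDF 0 V))
      = ∫ x, gaussianPDFReal 0 V x * Real.log (x ^ 2) := by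
    rw [gaussianPDF_def]
    rw [show (fun x => ENNReal.ofReal (gaussianPDFReal 0 V x))
        = fun x => ((Real.toNNReal (gaussianPDFReal 0 V x) : ℝ≥0) : ℝ≥0∞) from rfl]
    rw [integral_withDensity_eq_integral_smul (measurable_gaussianPDFReal 0 V).real_toNNReal]
    congr 1
    funext x
    rw [NNReal.smul_def, Real.coe_toNNReal _ (gaussianPDFReal_nonneg 0 V x), smul_eq_mul]
  rw [h2]
  -- Step 3: even function, reduce to Ioi 0
  have h3 : (∫ x : ℝ, gaussianPDFReal 0 V x * Real.log (x ^ 2))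
      = 2 * ∫ y in Set.Ioi (0:ℝ), gaussianPDFReal 0 V y * Real.log (y ^ 2) := by
    rw [← integral_comp_abs (f := fun y => gaussianPDFReal 0 V y * Real.log (y ^ 2))]
    congr 1
    funext x
    simp only [gaussianPDFReal, sub_zero, sq_abs]
  rw [h3]
  -- Step 4: substitution u = x^2
  set g : ℝ → ℝ := fun u => 2⁻¹ * (u ^ (-(2⁻¹:ℝ)) *
      (c * Real.exp (-u / (2 * v)) * Real.log u)) with hgdef
  have h4 : ∫ y in Set.Ioi (0:ℝ), gaussianPDFReal 0 V y * Real.log (y ^ 2)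
      = ∫ u in Set.Ioi (0:ℝ), g u := by
    rw [← integral_comp_rpow_Ioi g (two_ne_zero)]
    refine setIntegral_congr_fun measurableSet_Ioi (fun x hx => ?_)
    have hx0 : (0:ℝ) < x := hx
    have hxsq : x ^ (2:ℝ) = x ^ 2 := by
      rw [← Real.rpow_natCast x 2]; norm_num
    have hinv : (x ^ 2 : ℝ) ^ (-(2⁻¹:ℝ)) = x⁻¹ := by
      rw [← hxsq, ← Real.rpow_mul hx0.le]
      norm_num [Real.rpow_neg_one]
    rw [gaussianPDFReal]
    simp only [hgdef, smul_eq_mul, hxsq, hinv, sub_zero, hVv]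
    rw [show |(2:ℝ)| = 2 by norm_num, show ((2:ℝ)-1) = (1:ℝ) by norm_num, Real.rpow_one,
      ← hcdef]
    field_simp
  rw [h4]
  -- Step 5: scaling u = 2*v*t
  have h2v : (0:ℝ) < 2 * v := by positivity
  have h5 : ∫ u in Set.Ioi (0:ℝ), g u
      = (2 * v) * ∫ t in Set.Ioi (0:ℝ), g (2 * v * t) := by
    rw [integral_comp_mul_left_Ioi g 0 h2v, mul_zero, smul_eq_mul, ← mul_assoc,
      mul_inv_cancel₀ h2v.ne', one_mul]
  rw [h5]
  -- Step 6: evaluate the integral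
  set K : ℝ := 2⁻¹ * ((2 * v) ^ (-(2⁻¹:ℝ)) * c) with hKdef
  have h6 : ∫ t in Set.Ioi (0:ℝ), g (2 * v * t)
      = K * ∫ t in Set.Ioi (0:ℝ),
          (Real.log (2 * v) * (Real.exp (-t) * t ^ (-(2⁻¹:ℝ)))
            + t ^ (-(2⁻¹:ℝ)) * (Real.log t * Real.exp (-t))) := by
    rw [← integral_const_mul]
    refine setIntegral_congr_fun measurableSet_Ioi (fun t ht => ?_)
    have ht0 : (0:ℝ) < t := ht
    have hrp : ((2 * v * t : ℝ)) ^ (-(2⁻¹:ℝ)) = (2 * v) ^ (-(2⁻¹:ℝ)) * t ^ (-(2⁻¹:ℝ)) :=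
      Real.mul_rpow h2v.le ht0.le
    have hexp : -(2 * v * t) / (2 * v) = -t := by
      field_simp
    have hlog : Real.log (2 * v * t) = Real.log (2 * v) + Real.log t :=
      Real.log_mul h2v.ne' ht0.ne'
    simp only [hgdef, hKdef, hrp, hexp, hlog]
    ring
  rw [h6]
  -- Step 7: split and evaluate
  have hΓint : IntegrableOn (fun t : ℝ => Real.exp (-t) * t ^ (-(2⁻¹:ℝ))) (Set.Ioi 0) := by
    have := Real.GammaIntegral_convergent (by norm_num : (0:ℝ) < 1/2)
    convert this using 2 with t
    norm_num
  have hΓval : ∫ t in Set.Ioi (0:ℝ), Real.exp (-t) * t ^ (-(2⁻¹:ℝ)) = Real.sqrt π := by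
    have := Real.Gamma_eq_integral (by norm_num : (0:ℝ) < 1/2)
    rw [Real.Gamma_one_half_eq] at this
    rw [this]
    refine setIntegral_congr_fun measurableSet_Ioi (fun t ht => ?_)
    have he : ((1:ℝ)/2 - 1 : ℝ) = -2⁻¹ := by norm_num
    rw [he]
  have h7 : ∫ t in Set.Ioi (0:ℝ),
      (Real.log (2 * v) * (Real.exp (-t) * t ^ (-(2⁻¹:ℝ)))
        + t ^ (-(2⁻¹:ℝ)) * (Real.log t * Real.exp (-t)))
      = Real.log (2 * v) * Real.sqrt π
        + (-Real.sqrt π * (Real.eulerMascheroniConstant + 2 * Real.log 2)) := by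
    rw [integral_add (hΓint.const_mul _) Dlog_integrable, integral_const_mul, hΓval]
    rw [show (∫ t in Set.Ioi (0:ℝ), t ^ (-(2⁻¹:ℝ)) * (Real.log t * Real.exp (-t))) = Dlog from rfl,
      Dlog_val]
  rw [h7]
  -- Step 8: arithmetic
  have hsπ : (0:ℝ) < Real.sqrt π := Real.sqrt_pos.mpr pi_pos
  have hs2v : (0:ℝ) < Real.sqrt (2 * v) := Real.sqrt_pos.mpr h2v
  have hrpsqrt : (2 * v : ℝ) ^ (-(2⁻¹:ℝ)) = (Real.sqrt (2 * v))⁻¹ := by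
    rw [Real.rpow_neg h2v.le, Real.sqrt_eq_rpow]
    norm_num
  have hcsplit : c = (Real.sqrt π)⁻¹ * (Real.sqrt (2 * v))⁻¹ := by
    rw [hcdef, show (2 * π * v : ℝ) = π * (2 * v) by ring,
      Real.sqrt_mul pi_pos.le, mul_inv]
  have hlog2v : Real.log (2 * v) = Real.log 2 + Real.log v :=
    Real.log_mul two_ne_zero hv.ne'
  rw [hKdef, hrpsqrt, hcsplit, hlog2v]
  field_simp
  ring_nf
  rw [Real.sq_sqrt (by positivity : (0:ℝ) ≤ v * 2)]
  ring
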